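/- Premeasure verification for the induced measure on expansions of a countable structure: let M be a countably infinite L_Ext-structure with fixed enumeration and (P) a projective L_Ext-L_Int family of distributions on finite structures. Define P(D_X) := P_{X|_{L_Ext}}(X) on the semiring 𝒟 of cylinder sets over initial segments (together with P(∅)=0). Then P is σ-additive on 𝒟: whenever D_X is the disjoint union of a family {D_{X_i}}_{i∈I} of members of 𝒟, one has P(D_X) = Σ_{i∈I} P(D_{X_i}). (By the compactness lemma such a cover is necessarily finite, and finite additivity follows from projectivity and additivity of the distribution on a common initial segment.) -/

import Mathlib

open MeasureTheory

/-- An `L`-structure on domain `D`: an interpretation of each relation symbol `R`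
(of arity `ar R`) as a set of `ar R`-tuples from `D`. -/
def Struc (L : Type) (ar : L → ℕ) (D : Type) : Type :=
  ∀ R : L, (Fin (ar R) → D) → Prop

/-- `ω` (a structure on `D`) extends the image of `X` (a structure on `D'`) along the
injection `ι`; equivalently, `ι` is an embedding of structures from `X` to `ω`. -/
def ExtendsAlong {L : Type} {ar : L → ℕ} {D' D : Type} (ι : D' ↪ D)
    (X : Struc L ar D') (ω : Struc L ar D) : Prop :=
  ∀ (R : L) (s : Fin (ar R) → D'), ω R (fun i => ι (s i)) ↔ X R s

/-- Transport of a structure along a bijection. -/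
def Struc.map {L : Type} {ar : L → ℕ} {D D' : Type} (e : D ≃ D')
    (X : Struc L ar D) : Struc L ar D' :=
  fun R t => X R (fun i => e.symm (t i))

/-- The reduct of a structure to a subvocabulary `E`. -/
def reduct {L : Type} {ar : L → ℕ} (E : Set L) {D : Type} (X : Struc L ar D) :
    Struc ↥E (fun R => ar ↑R) D :=
  fun R t => X ↑R t

/-- A family of distributions indexed by all finite sets is projective if marginals
are invariant under injections. -/
def Projective {L : Type} {ar : L → ℕ}
    (P : ∀ (D : Type) [Fintype D], PMF (Struc L ar D)) : Prop :=
  ∀ (D' D : Type) [Fintype D'] [Fintype D] (ι : D' ↪ D) (X : Struc L ar D'),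
    P D' X = (P D).toOuterMeasure {ω | ExtendsAlong ι X ω}

/-- A structured (`S`-input, `T`-output) family of distributions is projective if
marginals are invariant under embeddings of input structures. -/
def ProjFam {S T : Type} {arS : S → ℕ} {arT : T → ℕ}
    (P : ∀ (D : Type) [Fintype D], Struc S arS D → PMF (Struc T arT D)) : Prop :=
  ∀ (D' D : Type) [Fintype D'] [Fintype D] (ι : D' ↪ D)
    (A' : Struc S arS D') (A : Struc S arS D), ExtendsAlong ι A' A →
    ∀ X : Struc T arT D',
      P D' A' X = (P D A).toOuterMeasure {ω | ExtendsAlong ι X ω}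

/-- Restriction of a structure on `ℕ` to the initial segment `{0, ..., n-1}`. -/
def restrictFin {L : Type} {ar : L → ℕ} (n : ℕ) (ω : Struc L ar ℕ) :
    Struc L ar (Fin n) :=
  fun R t => ω R (fun i => (t i : ℕ))

/-- The cylinder set of all `L_Int`-expansions of `M` extending the expansion `X`
of the initial segment of length `n`. -/
def Cyl {L : Type} (ar : L → ℕ) (E : Set L) (M : Struc ↥E (fun R => ar ↑R) ℕ)
    (n : ℕ) (X : Struc L ar (Fin n)) : Set (Struc L ar ℕ) :=
  {ω | reduct E ω = M ∧ restrictFin n ω = X}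

-- ===== auxiliary development =====

lemma strucEq_iff {L : Type} {ar : L → ℕ} {D : Type} (A B : Struc L ar D) :
    A = B ↔ ∀ R t, A R t ↔ B R t :=
  ⟨fun h R t => h ▸ Iff.rfl, fun h => funext fun R => funext fun t => propext (h R t)⟩

open Classical in
/-- encode a structure on ℕ as a point of a compact Boolean product space -/
noncomputable def encodeB {L : Type} {ar : L → ℕ} (ω : Struc L ar ℕ) :
    (Σ R : L, (Fin (ar R) → ℕ)) → Bool := fun p => decide (ω p.1 p.2)

def ofBool {L : Type} {ar : L → ℕ} (b : (Σ R : L, (Fin (ar R) → ℕ)) → Bool) :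
    Struc L ar ℕ := fun R t => b ⟨R, t⟩ = true

@[simp] lemma ofBool_toBool {L : Type} {ar : L → ℕ} (ω : Struc L ar ℕ) :
    ofBool (encodeB ω) = ω := by
  funext R t
  simp [ofBool, encodeB]

def USet {L : Type} (ar : L → ℕ) (m : ℕ) (Z : Struc L ar (Fin m)) :
    Set ((Σ R : L, (Fin (ar R) → ℕ)) → Bool) :=
  {b | ∀ R (t : Fin (ar R) → Fin m), (b ⟨R, fun i => (t i : ℕ)⟩ = true) ↔ Z R t}

def VSet {L : Type} (ar : L → ℕ) (E : Set L) (M : Struc ↥E (fun R => ar ↑R) ℕ) :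
    Set ((Σ R : L, (Fin (ar R) → ℕ)) → Bool) :=
  {b | ∀ (R : ↥E) (t : Fin (ar ↑R) → ℕ), (b ⟨↑R, t⟩ = true) ↔ M R t}

lemma USet_eq {L : Type} (ar : L → ℕ) (m : ℕ) (Z : Struc L ar (Fin m)) :
    USet ar m Z = ⋂ (R : L), ⋂ (t : Fin (ar R) → Fin m),
      (fun b => b ⟨R, fun i => (t i : ℕ)⟩) ⁻¹' {x : Bool | (x = true) ↔ Z R t} := by
  ext b
  simp only [USet, Set.mem_iInter, Set.mem_preimage, Set.mem_setOf_eq]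

lemma isOpen_USet {L : Type} [Finite L] (ar : L → ℕ) (m : ℕ) (Z : Struc L ar (Fin m)) :
    IsOpen (USet ar m Z) := by
  rw [USet_eq]
  exact isOpen_iInter_of_finite fun R => isOpen_iInter_of_finite fun t =>
    (continuous_apply _).isOpen_preimage _ (isOpen_discrete _)

lemma isClosed_USet {L : Type} (ar : L → ℕ) (m : ℕ) (Z : Struc L ar (Fin m)) :
    IsClosed (USet ar m Z) := by
  rw [USet_eq]
  exact isClosed_iInter fun R => isClosed_iInter fun t =>
    IsClosed.preimage (continuous_apply _) (isClosed_discrete _)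

lemma isClosed_VSet {L : Type} (ar : L → ℕ) (E : Set L)
    (M : Struc ↥E (fun R => ar ↑R) ℕ) : IsClosed (VSet ar E M) := by
  have : VSet ar E M = ⋂ (R : ↥E), ⋂ (t : Fin (ar ↑R) → ℕ),
      (fun b => b ⟨↑R, t⟩) ⁻¹' {x : Bool | (x = true) ↔ M R t} := by
    ext b
    simp only [VSet, Set.mem_iInter, Set.mem_preimage, Set.mem_setOf_eq]
  rw [this]
  exact isClosed_iInter fun R => isClosed_iInter fun t =>
    IsClosed.preimage (continuous_apply _) (isClosed_discrete _)

lemma toBool_mem_VSet_iff {L : Type} {ar : L → ℕ} {E : Set L}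
    {M : Struc ↥E (fun R => ar ↑R) ℕ} (ω : Struc L ar ℕ) :
    encodeB ω ∈ VSet ar E M ↔ reduct E ω = M := by
  rw [strucEq_iff]
  simp only [VSet, Set.mem_setOf_eq, encodeB, decide_eq_true_eq]
  rfl

lemma toBool_mem_USet_iff {L : Type} {ar : L → ℕ} {m : ℕ}
    {Z : Struc L ar (Fin m)} (ω : Struc L ar ℕ) :
    encodeB ω ∈ USet ar m Z ↔ restrictFin m ω = Z := by
  rw [strucEq_iff]
  simp only [USet, Set.mem_setOf_eq, encodeB, decide_eq_true_eq]
  rfl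

lemma mem_Cyl_iff_toBool {L : Type} {ar : L → ℕ} {E : Set L}
    {M : Struc ↥E (fun R => ar ↑R) ℕ} {m : ℕ} {Z : Struc L ar (Fin m)}
    (ω : Struc L ar ℕ) :
    ω ∈ Cyl ar E M m Z ↔ encodeB ω ∈ VSet ar E M ∩ USet ar m Z := by
  simp only [Cyl, Set.mem_setOf_eq, Set.mem_inter_iff, toBool_mem_VSet_iff,
    toBool_mem_USet_iff]

open Classical in
/-- canonical extension of a structure on `Fin m` to a structure on `ℕ` whose
reduct is `M` -/
noncomputable def extStruc {L : Type} (ar : L → ℕ) (E : Set L)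
    (M : Struc ↥E (fun R => ar ↑R) ℕ) (m : ℕ) (W : Struc L ar (Fin m)) :
    Struc L ar ℕ :=
  fun R t => if h : ∀ i, t i < m then W R (fun i => ⟨t i, h i⟩)
    else ∃ hR : R ∈ E, M ⟨R, hR⟩ t

lemma restrictFin_extStruc {L : Type} {ar : L → ℕ} (E : Set L)
    (M : Struc ↥E (fun R => ar ↑R) ℕ) {m : ℕ} (W : Struc L ar (Fin m))
    {m' : ℕ} (h : m' ≤ m) :
    restrictFin m' (extStruc ar E M m W)
      = fun R t => W R (fun i => Fin.castLE h (t i)) := by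
  funext R t
  have hc : ∀ i, ((t i : ℕ)) < m := fun i => lt_of_lt_of_le (t i).2 h
  simp only [restrictFin, extStruc, dif_pos hc]
  rfl

lemma reduct_extStruc {L : Type} {ar : L → ℕ} (E : Set L)
    (M : Struc ↥E (fun R => ar ↑R) ℕ) {m : ℕ} {W : Struc L ar (Fin m)}
    (hW : reduct E W = restrictFin m M) :
    reduct E (extStruc ar E M m W) = M := by
  funext R t
  obtain ⟨R, hR⟩ := R
  show extStruc ar E M m W R t = M ⟨R, hR⟩ t
  by_cases h : ∀ i, t i < m
  · rw [extStruc, dif_pos h]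
    have := congrFun (congrFun hW ⟨R, hR⟩) (fun i => (⟨t i, h i⟩ : Fin m))
    exact this
  · rw [extStruc, dif_neg h]
    exact propext ⟨fun ⟨hR', hM⟩ => hM, fun hM => ⟨hR, hM⟩⟩

lemma extStruc_mem_Cyl_iff {L : Type} {ar : L → ℕ} {E : Set L}
    {M : Struc ↥E (fun R => ar ↑R) ℕ} {m : ℕ} {W : Struc L ar (Fin m)}
    (hW : reduct E W = restrictFin m M) {m' : ℕ} (h : m' ≤ m)
    (Z : Struc L ar (Fin m')) :
    extStruc ar E M m W ∈ Cyl ar E M m' Z ↔ ExtendsAlong (Fin.castLEEmb h) Z W := by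
  have h1 : reduct E (extStruc ar E M m W) = M := reduct_extStruc E M hW
  simp only [Cyl, Set.mem_setOf_eq, h1, true_and, restrictFin_extStruc E M W h]
  refine (eq_comm.trans (strucEq_iff _ _)).trans ?_
  constructor
  · intro hz R s
    exact ((hz R s).symm).trans Iff.rfl
  · intro hz R s
    exact (hz R s).symm

lemma extStruc_mem_Cyl {L : Type} {ar : L → ℕ} {E : Set L}
    {M : Struc ↥E (fun R => ar ↑R) ℕ} {m : ℕ} {W : Struc L ar (Fin m)}
    (hW : reduct E W = restrictFin m M) :
    extStruc ar E M m W ∈ Cyl ar E M m W := by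
  rw [extStruc_mem_Cyl_iff hW (le_refl m)]
  intro R s
  exact Iff.rfl

lemma extendsAlong_restrictFin {L : Type} {ar : L → ℕ} {E : Set L}
    (M : Struc ↥E (fun R => ar ↑R) ℕ) {m' m : ℕ} (h : m' ≤ m) :
    ExtendsAlong (Fin.castLEEmb h) (restrictFin m' M) (restrictFin m M) :=
  fun R s => Iff.rfl

/-- the set function `D_X ↦ P_{X|_{L_Ext}}(X)` induced by a projective
`L_Ext`-`L_Int` family on the semiring of cylinder sets over initial segments of `M`
is σ-additive: a disjoint cylinder cover yields the corresponding sum identity. -/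
theorem stmt11 {L : Type} [Fintype L] (ar : L → ℕ) (E : Set L)
    (P : ∀ (D : Type) [Fintype D],
      Struc ↥E (fun R => ar ↑R) D → PMF (Struc L ar D))
    (hsupp : ∀ (D : Type) [Fintype D] (A : Struc ↥E (fun R => ar ↑R) D) X,
      P D A X ≠ 0 → reduct E X = A)
    (hP : ProjFam P)
    (M : Struc ↥E (fun R => ar ↑R) ℕ)
    {I : Type} (n : ℕ) (X : Struc L ar (Fin n))
    (hX : reduct E X = restrictFin n M)
    (k : I → ℕ) (Y : ∀ i, Struc L ar (Fin (k i)))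
    (hY : ∀ i, reduct E (Y i) = restrictFin (k i) M)
    (hdisj : Pairwise fun i j => Disjoint (Cyl ar E M (k i) (Y i)) (Cyl ar E M (k j) (Y j)))
    (hcover : Cyl ar E M n X = ⋃ i, Cyl ar E M (k i) (Y i)) :
    P (Fin n) (restrictFin n M) X =
      ∑' i : I, P (Fin (k i)) (restrictFin (k i) M) (Y i) := by
  classical
  -- Step 1: compactness yields a finite subcover.
  obtain ⟨S, hS⟩ : ∃ S : Finset I,
      Cyl ar E M n X ⊆ ⋃ i ∈ S, Cyl ar E M (k i) (Y i) := by
    have hcpt : IsCompact (VSet ar E M ∩ USet ar n X) :=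
      ((isClosed_VSet ar E M).inter (isClosed_USet ar n X)).isCompact
    have hsub : VSet ar E M ∩ USet ar n X ⊆ ⋃ i, USet ar (k i) (Y i) := by
      intro b hb
      have hω : ofBool b ∈ Cyl ar E M n X := by
        rw [mem_Cyl_iff_toBool]
        have : encodeB (ofBool b) = b := by
          funext p
          simp [encodeB, ofBool]
        rw [this]
        exact hb
      rw [hcover] at hω
      obtain ⟨i, hi⟩ := Set.mem_iUnion.mp hω
      refine Set.mem_iUnion.mpr ⟨i, ?_⟩
      have := (mem_Cyl_iff_toBool (ofBool b)).mp hi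
      have hb' : encodeB (ofBool b) = b := by
        funext p
        simp [encodeB, ofBool]
      rw [hb'] at this
      exact this.2
    obtain ⟨S, hS⟩ := hcpt.elim_finite_subcover _
      (fun i => isOpen_USet ar (k i) (Y i)) hsub
    refine ⟨S, fun ω hω => ?_⟩
    have hmem := (mem_Cyl_iff_toBool ω).mp hω
    obtain ⟨i, hiS, hui⟩ := Set.mem_iUnion₂.mp (hS hmem)
    exact Set.mem_iUnion₂.mpr ⟨i, hiS,
      (mem_Cyl_iff_toBool ω).mpr ⟨hmem.1, hui⟩⟩
  -- Step 2: every index belongs to `S`.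
  have hall : ∀ i, i ∈ S := by
    intro j
    by_contra hj
    have hωj : extStruc ar E M (k j) (Y j) ∈ Cyl ar E M (k j) (Y j) :=
      extStruc_mem_Cyl (hY j)
    have hωX : extStruc ar E M (k j) (Y j) ∈ Cyl ar E M n X := by
      rw [hcover]; exact Set.mem_iUnion.mpr ⟨j, hωj⟩
    obtain ⟨i, hiS, hωi⟩ := Set.mem_iUnion₂.mp (hS hωX)
    rcases eq_or_ne i j with rfl | hne
    · exact hj hiS
    · exact (hdisj hne).le_bot ⟨hωi, hωj⟩ |>.elim
  -- Step 3: a common large initial segment.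
  set N : ℕ := max n (S.sup k) with hN
  have hn : n ≤ N := le_max_left _ _
  have hk : ∀ i, k i ≤ N :=
    fun i => le_trans (Finset.le_sup (hall i)) (le_max_right _ _)
  set p : PMF (Struc L ar (Fin N)) := P (Fin N) (restrictFin N M) with hp
  -- target sets in `Struc L ar (Fin N)`
  set TX : Set (Struc L ar (Fin N)) :=
    {W | ExtendsAlong (Fin.castLEEmb hn) X W} with hTX
  set T : I → Set (Struc L ar (Fin N)) :=
    fun i => {W | ExtendsAlong (Fin.castLEEmb (hk i)) (Y i) W} with hT
  have hPX : P (Fin n) (restrictFin n M) X = p.toOuterMeasure TX :=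
    hP (Fin n) (Fin N) (Fin.castLEEmb hn) (restrictFin n M) (restrictFin N M)
      (extendsAlong_restrictFin M hn) X
  have hPY : ∀ i, P (Fin (k i)) (restrictFin (k i) M) (Y i)
      = p.toOuterMeasure (T i) :=
    fun i => hP (Fin (k i)) (Fin N) (Fin.castLEEmb (hk i)) (restrictFin (k i) M)
      (restrictFin N M) (extendsAlong_restrictFin M (hk i)) (Y i)
  -- Step 4: pointwise additivity of indicators on the support of `p`.
  have hpt : ∀ W : Struc L ar (Fin N),
      TX.indicator p W = ∑ i ∈ S, (T i).indicator p W := by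
    intro W
    by_cases hW : p W = 0
    · simp [Set.indicator_apply, hW]
    · have hred : reduct E W = restrictFin N M := hsupp (Fin N) _ W hW
      by_cases hWX : W ∈ TX
      · have hext : extStruc ar E M N W ∈ Cyl ar E M n X :=
          (extStruc_mem_Cyl_iff hred hn X).mpr hWX
        rw [hcover] at hext
        obtain ⟨j, hj⟩ := Set.mem_iUnion.mp hext
        have hWj : W ∈ T j := (extStruc_mem_Cyl_iff hred (hk j) (Y j)).mp hj
        rw [Set.indicator_of_mem hWX]
        rw [Finset.sum_eq_single_of_mem j (hall j)]
        · rw [Set.indicator_of_mem hWj]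
        · intro i _ hij
          rw [Set.indicator_of_notMem]
          intro hWi
          have hi : extStruc ar E M N W ∈ Cyl ar E M (k i) (Y i) :=
            (extStruc_mem_Cyl_iff hred (hk i) (Y i)).mpr hWi
          exact (hdisj hij).le_bot ⟨hi, hj⟩
      · rw [Set.indicator_of_notMem hWX]
        refine (Finset.sum_eq_zero fun i _ => ?_).symm
        rw [Set.indicator_of_notMem]
        intro hWi
        have hi : extStruc ar E M N W ∈ Cyl ar E M (k i) (Y i) :=
          (extStruc_mem_Cyl_iff hred (hk i) (Y i)).mpr hWi
        have : extStruc ar E M N W ∈ Cyl ar E M n X := by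
          rw [hcover]; exact Set.mem_iUnion.mpr ⟨i, hi⟩
        exact hWX ((extStruc_mem_Cyl_iff hred hn X).mp this)
  -- Step 5: sum up.
  rw [hPX]
  rw [tsum_eq_sum (s := S) (fun i hi => absurd (hall i) hi)]
  rw [PMF.toOuterMeasure_apply]
  calc ∑' W, TX.indicator p W
      = ∑' W, ∑ i ∈ S, (T i).indicator p W := tsum_congr hpt
    _ = ∑ i ∈ S, ∑' W, (T i).indicator p W :=
        Summable.tsum_finsetSum fun i _ => ENNReal.summable
    _ = ∑ i ∈ S, P (Fin (k i)) (restrictFin (k i) M) (Y i) := by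
        refine Finset.sum_congr rfl fun i _ => ?_
        rw [hPY i, PMF.toOuterMeasure_apply]
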